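/- Let X be a random variable with values in a measurable space 𝒳 and distribution P, and g : 𝒳 → ℝ^m measurable with E‖g(X)‖² < ∞, E g(X) = 0, and Σ = E[g(X) g(X)ᵀ] positive definite. Then inf_{θ ∈ S^{m−1}} E[ (θᵀ g(X))² 1_{θᵀ g(X) ≥ 0} ] > 0. -/

import Mathlib

open MeasureTheory ProbabilityTheory

/-- if `g : 𝒳 → ℝ^m` is square integrable under `P`, centered, and
`Σ = E[g gᵀ]` is positive definite, then
`inf_{θ ∈ S^{m-1}} E[(θᵀg(X))² 1_{θᵀg(X) ≥ 0}] > 0`. -/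
theorem stmt7 {𝓧 : Type*} [MeasurableSpace 𝓧]
    (P : Measure 𝓧) [IsProbabilityMeasure P]
    (m : ℕ) (hm : 0 < m)
    (g : 𝓧 → Fin m → ℝ) (hgmeas : ∀ j, Measurable fun x => g x j)
    (hgL2 : ∀ j, MemLp (fun x => g x j) 2 P)
    (hcent : ∀ j, (∫ x, g x j ∂P) = 0)
    (Sig : Matrix (Fin m) (Fin m) ℝ)
    (hSig : ∀ j k, Sig j k = ∫ x, g x j * g x k ∂P)
    (hposdef : Sig.PosDef) :
    0 < sInf ((fun θ : Fin m → ℝ =>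
        ∫ x, (if 0 ≤ ∑ j, θ j * g x j then (∑ j, θ j * g x j) ^ 2 else 0) ∂P)
      '' {θ : Fin m → ℝ | (∑ j, θ j ^ 2) = 1}) := by
  classical
  set S : Set (Fin m → ℝ) := {θ : Fin m → ℝ | (∑ j, θ j ^ 2) = 1} with hSdef
  set F : (Fin m → ℝ) → ℝ := fun θ => ∫ x, (max (∑ j, θ j * g x j) 0) ^ 2 ∂P with hFdef
  -- identify the integrand
  have hFeq : (fun θ : Fin m → ℝ =>
        ∫ x, (if 0 ≤ ∑ j, θ j * g x j then (∑ j, θ j * g x j) ^ 2 else 0) ∂P) = F := by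
    funext θ
    refine integral_congr_ae (Filter.Eventually.of_forall fun x => ?_)
    by_cases h : 0 ≤ ∑ j, θ j * g x j
    · simp [h, max_eq_left h]
    · simp [h, max_eq_right (le_of_not_ge h)]
  rw [hFeq]
  -- basics
  have hs_meas : ∀ θ : Fin m → ℝ, Measurable (fun x => ∑ j, θ j * g x j) := fun θ =>
    Finset.measurable_sum _ fun j _ => (hgmeas j).const_mul (θ j)
  have hsL2 : ∀ θ : Fin m → ℝ, MemLp (fun x => ∑ j, θ j * g x j) 2 P := fun θ =>
    memLp_finset_sum _ fun j _ => (hgL2 j).const_mul (θ j)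
  have hmul : ∀ j k, Integrable (fun x => g x j * g x k) P := by
    intro j k
    have h1 := (hgL2 j).integrable_sq
    have h2 := (hgL2 k).integrable_sq
    refine ((h1.add h2).div_const 2).mono' (((hgmeas j).mul (hgmeas k)).aestronglyMeasurable) ?_
    filter_upwards with x
    simp only [Pi.add_apply, Real.norm_eq_abs]
    rcases abs_cases (g x j * g x k) with ⟨h, _⟩ | ⟨h, _⟩ <;> rw [h] <;>
      nlinarith [sq_nonneg (g x j - g x k), sq_nonneg (g x j + g x k)]
  have habsL2 : MemLp (fun x => ∑ j, |g x j|) 2 P := by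
    refine memLp_finset_sum _ fun j _ => ?_
    simpa [Real.norm_eq_abs] using (hgL2 j).norm
  have hboundInt : Integrable (fun x => (∑ j, |g x j|) ^ 2) P := habsL2.integrable_sq
  -- continuity of F
  have hFcont : Continuous F := by
    rw [continuous_iff_continuousAt]
    intro θ₀
    have hC : ∀ᶠ θ : Fin m → ℝ in nhds θ₀, ∀ j, |θ j| ≤ ‖θ₀‖ + 1 := by
      filter_upwards [Metric.ball_mem_nhds θ₀ one_pos] with θ hθ j
      have h1 : ‖θ - θ₀‖ < 1 := by simpa [dist_eq_norm] using hθ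
      have h2 : |θ j| ≤ ‖θ‖ := by
        simpa [Real.norm_eq_abs] using norm_le_pi_norm θ j
      have h3 : ‖θ‖ ≤ ‖θ₀‖ + ‖θ - θ₀‖ := by
        simpa using norm_add_le θ₀ (θ - θ₀)
      linarith
    refine continuousAt_of_dominated (bound := fun x => (‖θ₀‖ + 1) ^ 2 * (∑ j, |g x j|) ^ 2) ?_ ?_ ?_ ?_
    · filter_upwards with θ
      exact (((hs_meas θ).max measurable_const).pow_const 2).aestronglyMeasurable
    · filter_upwards [hC] with θ hθ
      filter_upwards with x
      rw [Real.norm_eq_abs, abs_of_nonneg (sq_nonneg _)]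
      have h1 : |∑ j, θ j * g x j| ≤ (‖θ₀‖ + 1) * ∑ j, |g x j| := by
        calc |∑ j, θ j * g x j| ≤ ∑ j, |θ j * g x j| := Finset.abs_sum_le_sum_abs _ _
        _ ≤ ∑ j, (‖θ₀‖ + 1) * |g x j| := by
            refine Finset.sum_le_sum fun j _ => ?_
            rw [abs_mul]
            exact mul_le_mul_of_nonneg_right (hθ j) (abs_nonneg _)
        _ = (‖θ₀‖ + 1) * ∑ j, |g x j| := by rw [Finset.mul_sum]
      have h2 : (max (∑ j, θ j * g x j) 0) ^ 2 ≤ (∑ j, θ j * g x j) ^ 2 := by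
        rcases le_total (∑ j, θ j * g x j) 0 with h | h
        · rw [max_eq_right h]; simpa using sq_nonneg (∑ j, θ j * g x j)
        · rw [max_eq_left h]
      have h3 : (∑ j, θ j * g x j) ^ 2 ≤ ((‖θ₀‖ + 1) * ∑ j, |g x j|) ^ 2 := by
        rw [← sq_abs]
        exact pow_le_pow_left₀ (abs_nonneg _) h1 2
      calc (max (∑ j, θ j * g x j) 0) ^ 2 ≤ ((‖θ₀‖ + 1) * ∑ j, |g x j|) ^ 2 := h2.trans h3
      _ = (‖θ₀‖ + 1) ^ 2 * (∑ j, |g x j|) ^ 2 := by ring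
    · exact hboundInt.const_mul _
    · filter_upwards with x
      have : Continuous fun θ : Fin m → ℝ => (max (∑ j, θ j * g x j) 0) ^ 2 := by
        refine ((Continuous.max ?_ continuous_const).pow 2)
        exact continuous_finset_sum _ fun j _ => (continuous_apply j).mul continuous_const
      exact this.continuousAt
  -- positivity of F on S
  have hFpos : ∀ θ ∈ S, 0 < F θ := by
    intro θ hθ
    set s : 𝓧 → ℝ := fun x => ∑ j, θ j * g x j with hsdef
    have hθne : θ ≠ 0 := by
      intro h
      rw [h] at hθ
      simp [hSdef] at hθ
    -- ∫ s = 0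
    have hsint : Integrable s P := (hsL2 θ).integrable one_le_two
    have hs0 : ∫ x, s x ∂P = 0 := by
      rw [hsdef]
      rw [integral_finset_sum _ fun j _ =>
        (((hgL2 j).integrable one_le_two).const_mul (θ j))]
      simp [integral_const_mul, hcent]
    -- ∫ s² = θ ⬝ Σ θ > 0
    have hs2 : ∫ x, (s x) ^ 2 ∂P = ∑ j, ∑ k, θ j * θ k * Sig j k := by
      have : ∀ x, (s x) ^ 2 = ∑ j, ∑ k, θ j * θ k * (g x j * g x k) := by
        intro x
        rw [hsdef]
        simp only [sq, Finset.sum_mul_sum]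
        exact Finset.sum_congr rfl fun j _ => Finset.sum_congr rfl fun k _ => by ring
      simp_rw [this]
      rw [integral_finset_sum _ fun j _ => integrable_finset_sum _ fun k _ =>
        ((hmul j k).const_mul (θ j * θ k))]
      refine Finset.sum_congr rfl fun j _ => ?_
      rw [integral_finset_sum _ fun k _ => ((hmul j k).const_mul (θ j * θ k))]
      refine Finset.sum_congr rfl fun k _ => ?_
      rw [integral_const_mul, hSig]
    have hquad : 0 < ∑ j, ∑ k, θ j * θ k * Sig j k := by
      have h := hposdef.dotProduct_mulVec_pos hθne
      have heq : dotProduct (star θ) (Sig.mulVec θ)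
          = ∑ j, ∑ k, θ j * θ k * Sig j k := by
        simp only [star_trivial, dotProduct, Matrix.mulVec, Finset.mul_sum]
        exact Finset.sum_congr rfl fun j _ => Finset.sum_congr rfl fun k _ => by ring
      rw [heq] at h
      exact h
    have hs2pos : 0 < ∫ x, (s x) ^ 2 ∂P := by rw [hs2]; exact hquad
    -- F θ ≥ 0, suppose = 0
    have hFnonneg : 0 ≤ F θ := integral_nonneg fun x => sq_nonneg _
    rcases lt_or_eq_of_le hFnonneg with h | h
    · exact h
    exfalso
    -- (max s 0)² integrable
    have hmaxint : Integrable (fun x => (max (s x) 0) ^ 2) P := by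
      refine ((hsL2 θ).integrable_sq).mono'
        (((hs_meas θ).max measurable_const).pow_const 2).aestronglyMeasurable ?_
      filter_upwards with x
      rw [Real.norm_eq_abs, abs_of_nonneg (sq_nonneg _)]
      rcases le_total (s x) 0 with hx | hx
      · rw [max_eq_right hx]; simpa using sq_nonneg (s x)
      · rw [max_eq_left hx]
    have hmax0 : (fun x => (max (s x) 0) ^ 2) =ᶠ[ae P] 0 := by
      rw [← integral_eq_zero_iff_of_nonneg (fun x => sq_nonneg _) hmaxint]
      exact h.symm
    have hsle : ∀ᵐ x ∂P, s x ≤ 0 := by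
      filter_upwards [hmax0] with x hx
      simp only [Pi.zero_apply, pow_eq_zero_iff, max_eq_iff] at hx
      by_contra hc
      push_neg at hc
      have : max (s x) 0 = s x := max_eq_left hc.le
      have h2 : (max (s x) 0) ^ 2 = 0 := by
        simpa using hx
      rw [this] at h2
      nlinarith
    -- then s = 0 a.e.
    have hnegint : Integrable (fun x => -s x) P := hsint.neg
    have hneg0 : ∫ x, -s x ∂P = 0 := by rw [integral_neg, hs0, neg_zero]
    have hseq0 : (fun x => -s x) =ᶠ[ae P] 0 := by
      rw [← integral_eq_zero_iff_of_nonneg_ae ?_ hnegint]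
      · exact hneg0
      · filter_upwards [hsle] with x hx
        simpa using hx
    have hsq0 : ∫ x, (s x) ^ 2 ∂P = 0 := by
      refine integral_eq_zero_of_ae ?_
      filter_upwards [hseq0] with x hx
      simp only [Pi.zero_apply, neg_eq_zero] at hx
      simp [hx]
    rw [hsq0] at hs2pos
    exact lt_irrefl 0 hs2pos
  -- compactness of S
  have hScl : IsClosed S := isClosed_eq (by continuity) continuous_const
  have hSbd : Bornology.IsBounded S := by
    refine (Metric.isBounded_iff_subset_closedBall 0).mpr ⟨1, fun θ hθ => ?_⟩
    simp only [Metric.mem_closedBall, dist_zero_right]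
    rw [pi_norm_le_iff_of_nonneg zero_le_one]
    intro j
    rw [Real.norm_eq_abs, abs_le_one_iff_mul_self_le_one, ← sq]
    calc θ j ^ 2 ≤ ∑ k, θ k ^ 2 :=
      Finset.single_le_sum (fun k _ => sq_nonneg (θ k)) (Finset.mem_univ j)
    _ = 1 := hθ
  have hScomp : IsCompact S := Metric.isCompact_of_isClosed_isBounded hScl hSbd
  have hSne : S.Nonempty := by
    refine ⟨Pi.single ⟨0, hm⟩ 1, ?_⟩
    simp [hSdef, Pi.single_apply, Finset.sum_ite_eq']
  obtain ⟨θ₀, hθ₀S, hmin⟩ := hScomp.exists_isMinOn hSne hFcont.continuousOn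
  refine lt_of_lt_of_le (hFpos θ₀ hθ₀S) (le_csInf (hSne.image F) ?_)
  rintro b ⟨θ, hθ, rfl⟩
  exact hmin hθ
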